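/- Suppose a nonnegative function D on [0, Λ₀] satisfies: D(Λ) ≤ A·(M)^{4-2n-z}·P(log(M/m)) + ∫_Λ^{M} (λ+m)^{5-2n-z} M^{-2} P(log(M/m)) dλ for Λ ∈ [0,M], where 2n+z > 5 and A ≥ 0, P a polynomial with nonnegative coefficients, 0 < m ≤ M. Then there is a polynomial Q with nonnegative coefficients (independent of M, Λ) such that D(Λ) ≤ (Λ+m)^{6-2n-z} M^{-2} Q(log(M/m)) for all Λ ∈ [0, M]. -/
import Mathlib


open Real Set

private lemma zpow_anti' {x y : ℝ} (hx : 0 < x) (hxy : x ≤ y) {e : ℤ} (he : e ≤ 0) :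
    y ^ e ≤ x ^ e := by
  have hy : 0 < y := hx.trans_le hxy
  have hle : x ^ (-e) ≤ y ^ (-e) := by
    lift -e to ℕ using (by omega) with k
    rw [zpow_natCast, zpow_natCast]
    exact pow_le_pow_left₀ hx.le hxy k
  rw [show (y:ℝ) ^ e = (y ^ (-e))⁻¹ by rw [← zpow_neg, neg_neg],
      show (x:ℝ) ^ e = (x ^ (-e))⁻¹ by rw [← zpow_neg, neg_neg]]
  exact inv_anti₀ (zpow_pos hx _) hle

private lemma eval_nonneg_of_coeff_nonneg (P : Polynomial ℝ) (hP : ∀ i, 0 ≤ P.coeff i)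
    {t : ℝ} (ht : 0 ≤ t) : 0 ≤ P.eval t := by
  rw [Polynomial.eval_eq_sum_range]
  exact Finset.sum_nonneg fun i _ => mul_nonneg (hP i) (pow_nonneg ht i)

private lemma key_integral (m a b : ℝ) (hm : 0 < m) (ha : 0 ≤ a) (hab : a + m ≤ b)
    {e : ℤ} (he : e ≤ -1) :
    ∫ l in a..b, (l + m) ^ e ≤ (a + m) ^ (e + 1) * (1 + Real.log (b / m)) := by
  have ham : 0 < a + m := by linarith
  have hb : 0 < b := lt_of_lt_of_le ham hab
  have hbm : 0 < b + m := by linarith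
  have hab' : a ≤ b := by linarith
  have hmb : m ≤ b := by linarith
  have hlog : 0 ≤ Real.log (b / m) := Real.log_nonneg ((one_le_div hm).2 hmb)
  have hint : (∫ l in a..b, (l + m) ^ e) = ∫ x in (a+m)..(b+m), x ^ e := by
    simpa using intervalIntegral.integral_comp_add_right (fun x => x ^ e) m
  have hzero : (0:ℝ) ∉ Set.uIcc (a+m) (b+m) := by
    rw [Set.uIcc_of_le (by linarith)]
    intro h
    exact absurd h.1 (by linarith)
  rcases eq_or_lt_of_le he with heq | hlt
  · -- e = -1
    have he1 : e = -1 := heq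
    subst he1
    rw [hint]
    have : (∫ x in (a+m)..(b+m), x ^ (-1 : ℤ)) = Real.log ((b+m)/(a+m)) := by
      rw [show (fun x : ℝ => x ^ (-1 : ℤ)) = fun x : ℝ => x⁻¹ by
        funext x; simp [zpow_neg]]
      exact integral_inv hzero
    rw [this]
    simp only [show (-1 : ℤ) + 1 = 0 by ring, zpow_zero, one_mul]
    have h1 : (b+m)/(a+m) ≤ 2*(b/m) := by
      rw [div_le_iff₀ ham]
      have : 2*(b/m)*(a+m) = 2*b*((a+m)/m) := by ring
      rw [this]
      have h2 : (1:ℝ) ≤ (a+m)/m := by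
        rw [le_div_iff₀ hm]; linarith
      nlinarith
    calc Real.log ((b+m)/(a+m)) ≤ Real.log (2*(b/m)) :=
          Real.log_le_log (by positivity) h1
      _ = Real.log 2 + Real.log (b/m) := Real.log_mul (by norm_num) (by positivity)
      _ ≤ 1 + Real.log (b/m) := by
          have : Real.log 2 ≤ 2 - 1 := Real.log_le_sub_one_of_pos (by norm_num)
          linarith
  · -- e < -1
    have hne : e ≠ -1 := by omega
    rw [hint]
    have heval : (∫ x in (a+m)..(b+m), x ^ e)
        = ((b+m) ^ (e+1) - (a+m) ^ (e+1)) / (e+1) := by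
      exact integral_zpow (Or.inr ⟨hne, hzero⟩)
    rw [heval]
    have he1 : (e:ℝ) + 1 ≤ -1 := by
      have : e + 1 ≤ -1 := by omega
      exact_mod_cast this
    have hbpos : (0:ℝ) ≤ (b+m) ^ (e+1) := (zpow_pos hbm _).le
    have hapos : (0:ℝ) < (a+m) ^ (e+1) := zpow_pos ham _
    have h1 : ((b+m) ^ (e+1) - (a+m) ^ (e+1)) / ((e:ℝ)+1)
        = ((a+m) ^ (e+1) - (b+m) ^ (e+1)) / (-((e:ℝ)+1)) := by
      rw [div_neg, ← neg_div, neg_sub]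
    rw [h1]
    have hden : (1:ℝ) ≤ -((e:ℝ)+1) := by linarith
    calc ((a+m) ^ (e+1) - (b+m) ^ (e+1)) / (-((e:ℝ)+1))
        ≤ (a+m) ^ (e+1) / 1 := by
          apply div_le_div₀ (hapos.le) (by linarith) (by norm_num) hden
      _ = (a+m) ^ (e+1) := div_one _
      _ ≤ (a+m) ^ (e+1) * (1 + Real.log (b/m)) := by nlinarith

private lemma coeff_mul_nonneg (p q : Polynomial ℝ) (hp : ∀ i, 0 ≤ p.coeff i)
    (hq : ∀ i, 0 ≤ q.coeff i) : ∀ i, 0 ≤ (p * q).coeff i := by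
  intro i
  rw [Polynomial.coeff_mul]
  exact Finset.sum_nonneg fun x _ => mul_nonneg (hp _) (hq _)

theorem decoupling_estimate_step
    (m : ℝ) (hm : 0 < m) (n z : ℕ) (hnz : 5 < 2 * n + z)
    (A : ℝ) (hA : 0 ≤ A)
    (P : Polynomial ℝ) (hP : ∀ i, 0 ≤ P.coeff i) :
    ∃ Q : Polynomial ℝ, (∀ i, 0 ≤ Q.coeff i) ∧
      ∀ M : ℝ, m ≤ M →
        ∀ D : ℝ → ℝ,
          (∀ Λ ∈ Icc (0:ℝ) M, 0 ≤ D Λ) →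
          (∀ Λ ∈ Icc (0:ℝ) M,
            D Λ ≤ A * M ^ ((4 : ℤ) - 2 * n - z) * P.eval (Real.log (M / m)) +
              ∫ l in Λ..M,
                (l + m) ^ ((5 : ℤ) - 2 * n - z) * M ^ (-2 : ℤ) *
                  P.eval (Real.log (M / m))) →
          ∀ Λ : ℝ, 0 ≤ Λ → Λ + m ≤ M →
            D Λ ≤ (Λ + m) ^ ((6 : ℤ) - 2 * n - z) * M ^ (-2 : ℤ) *
              Q.eval (Real.log (M / m)) := by
  refine ⟨P * (Polynomial.C (A + 1) + Polynomial.X), ?_, ?_⟩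
  · apply coeff_mul_nonneg _ _ hP
    intro i
    simp only [Polynomial.coeff_add, Polynomial.coeff_C, Polynomial.coeff_X]
    rcases i with _ | _ | i <;> simp <;> linarith
  · intro M hM D hD0 hDle Λ hΛ hΛM
    set t := Real.log (M / m) with ht_def
    have hMpos : 0 < M := hm.trans_le hM
    have ht : 0 ≤ t := Real.log_nonneg ((one_le_div hm).2 hM)
    have hPt : 0 ≤ P.eval t := eval_nonneg_of_coeff_nonneg P hP ht
    set e : ℤ := (5 : ℤ) - 2 * n - z with he_def
    have he : e ≤ -1 := by
      have : (6:ℤ) ≤ 2 * (n:ℤ) + (z:ℤ) := by exact_mod_cast hnz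
      omega
    have hΛmem : Λ ∈ Icc (0:ℝ) M := ⟨hΛ, by linarith⟩
    have hbound := hDle Λ hΛmem
    have ham : 0 < Λ + m := by linarith
    -- rewrite integral
    have hintconst : (∫ l in Λ..M, (l + m) ^ e * M ^ (-2:ℤ) * P.eval t)
        = (∫ l in Λ..M, (l + m) ^ e) * (M ^ (-2:ℤ) * P.eval t) := by
      rw [← intervalIntegral.integral_mul_const]
      congr 1; funext l; ring
    have hkey := key_integral m Λ M hm hΛ hΛM he
    have hc2 : (0:ℝ) ≤ M ^ (-2:ℤ) * P.eval t :=
      mul_nonneg (zpow_pos hMpos _).le hPt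
    have hintle : (∫ l in Λ..M, (l + m) ^ e * M ^ (-2:ℤ) * P.eval t)
        ≤ (Λ + m) ^ (e + 1) * (1 + t) * (M ^ (-2:ℤ) * P.eval t) := by
      rw [hintconst]
      exact mul_le_mul_of_nonneg_right hkey hc2
    -- A term
    have hM4 : A * M ^ ((4 : ℤ) - 2 * n - z) * P.eval t
        ≤ A * ((Λ + m) ^ (e + 1) * M ^ (-2:ℤ)) * P.eval t := by
      have h1 : M ^ ((4 : ℤ) - 2 * n - z) = M ^ (e + 1) * M ^ (-2:ℤ) := by
        rw [← zpow_add₀ hMpos.ne']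
        congr 1
        omega
      rw [h1]
      have h2 : M ^ (e + 1) ≤ (Λ + m) ^ (e + 1) :=
        zpow_anti' ham hΛM (by omega)
      have h3 : M ^ (e + 1) * M ^ (-2:ℤ) ≤ (Λ + m) ^ (e + 1) * M ^ (-2:ℤ) :=
        mul_le_mul_of_nonneg_right h2 (zpow_pos hMpos _).le
      have h4 := mul_le_mul_of_nonneg_left h3 hA
      exact mul_le_mul_of_nonneg_right h4 hPt
    have hfinal : D Λ ≤ A * ((Λ + m) ^ (e + 1) * M ^ (-2:ℤ)) * P.eval t
        + (Λ + m) ^ (e + 1) * (1 + t) * (M ^ (-2:ℤ) * P.eval t) :=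
      le_trans hbound (add_le_add hM4 hintle)
    have hexp : ((6 : ℤ) - 2 * n - z) = e + 1 := by rw [he_def]; ring
    rw [hexp]
    have heval : (P * (Polynomial.C (A + 1) + Polynomial.X)).eval t
        = P.eval t * (A + 1 + t) := by simp
    rw [heval]
    calc D Λ ≤ A * ((Λ + m) ^ (e + 1) * M ^ (-2:ℤ)) * P.eval t
          + (Λ + m) ^ (e + 1) * (1 + t) * (M ^ (-2:ℤ) * P.eval t) := hfinal
      _ = (Λ + m) ^ (e + 1) * M ^ (-2:ℤ) * (P.eval t * (A + 1 + t)) := by ring
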